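/- arXiv:2603.06345 — 3 statements merged into one kernel-verified Lean document; each statement's English description precedes it below -/
import Mathlib

section
/- If M is a minimal matrix proof (a matrix with a spanning set of connections such that no strict subset of M has a spanning set of connections), then every literal occurring in a clause of M is connected to at least one literal in a different clause of M. -/
/-- A path through a matrix `M` (a finite set of clauses) assigns to each
clause a literal chosen from it. -/
def IsPath {L : Type*} (M : Finset (Finset L)) (p : Finset L → L) : Prop :=
  ∀ C ∈ M, p C ∈ C

/-- A path is closed (w.r.t. connection relation `R`) if it contains a
connected pair of literals from distinct clauses. -/
def ClosedPath {L : Type*} (R : L → L → Prop) (M : Finset (Finset L))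
    (p : Finset L → L) : Prop :=
  ∃ C ∈ M, ∃ D ∈ M, C ≠ D ∧ R (p C) (p D)

/-- `M` has a spanning set of connections (is a matrix proof) if every path
through `M` is closed. -/
def Spanning {L : Type*} (R : L → L → Prop) (M : Finset (Finset L)) : Prop :=
  ∀ p, IsPath M p → ClosedPath R M p

/-- A minimal matrix proof is fully connected: every literal of every clause
is connected to some literal of a different clause. -/
theorem minimal_matrix_proof_fully_connected {L : Type*}
    (R : L → L → Prop) (M : Finset (Finset L))
    (hproof : Spanning R M)
    (hmin : ∀ M' : Finset (Finset L), M' ⊂ M → ¬ Spanning R M') :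
    ∀ C ∈ M, ∀ l ∈ C, ∃ D ∈ M, D ≠ C ∧ ∃ k ∈ D, R l k ∨ R k l := by
  classical
  intro C hC l hl
  have hsub : M.erase C ⊂ M := Finset.erase_ssubset hC
  have hns := hmin _ hsub
  simp only [Spanning, not_forall] at hns
  obtain ⟨p', hp', hopen⟩ := hns
  set q : Finset L → L := fun D => if D = C then l else p' D with hq
  have hpath : IsPath M q := by
    intro D hD
    by_cases h : D = C
    · simp [hq, h, hl]
    · simp only [hq, if_neg h]
      exact hp' D (Finset.mem_erase.mpr ⟨h, hD⟩)
  obtain ⟨C₁, hC₁, C₂, hC₂, hne, hR⟩ := hproof q hpath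
  by_cases h1 : C₁ = C
  · subst h1
    refine ⟨C₂, hC₂, (Ne.symm hne), q C₂, hpath C₂ hC₂, ?_⟩
    left
    simpa [hq] using hR
  · by_cases h2 : C₂ = C
    · subst h2
      refine ⟨C₁, hC₁, hne, q C₁, hpath C₁ hC₁, ?_⟩
      right
      simpa [hq] using hR
    · exact absurd ⟨C₁, Finset.mem_erase.mpr ⟨h1, hC₁⟩, C₂,
        Finset.mem_erase.mpr ⟨h2, hC₂⟩, hne, by simpa [hq, h1, h2] using hR⟩ hopen
end

section
/- If a matrix M has a spanning set of connections and L is a literal in some clause C of M that participates in no connection, then the matrix M \ {C} also has a spanning set of connections. -/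
/-- If `M` has a spanning set of connections and `l ∈ C ∈ M` participates in
no connection, then `M \ {C}` also has a spanning set of connections. -/
theorem remove_clause_of_unconnected_literal {L : Type*} [DecidableEq L]
    (R : L → L → Prop) (M : Finset (Finset L))
    (hspan : Spanning R M)
    (C : Finset L) (hC : C ∈ M) (l : L) (hl : l ∈ C)
    (hno : ∀ k : L, ¬ R l k ∧ ¬ R k l) :
    Spanning R (M.erase C) := by
  intro p hp
  set q := Function.update p C l with hq
  have hq' : ∀ D, D ≠ C → q D = p D := fun D h => Function.update_of_ne h _ _
  have hpath : IsPath M q := by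
    intro D hD
    by_cases h : D = C
    · subst h; simpa [hq] using hl
    · rw [hq' D h]; exact hp D (Finset.mem_erase.mpr ⟨h, hD⟩)
  obtain ⟨C1, hC1, D1, hD1, hne, hR⟩ := hspan q hpath
  have hC1C : C1 ≠ C := by
    rintro rfl
    have : q C1 = l := by simp [hq]
    rw [this] at hR
    exact (hno (q D1)).1 hR
  have hD1C : D1 ≠ C := by
    rintro rfl
    have : q D1 = l := by simp [hq]
    rw [this] at hR
    exact (hno (q C1)).2 hR
  refine ⟨C1, Finset.mem_erase.mpr ⟨hC1C, hC1⟩, D1, Finset.mem_erase.mpr ⟨hD1C, hD1⟩, hne, ?_⟩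
  rwa [hq' C1 hC1C, hq' D1 hD1C] at hR
end

section
/- A finite nonempty set M of nonempty ground clauses is propositionally unsatisfiable if and only if every path through M (choice of one literal per clause) contains a complementary pair of literals. -/
/-- A ground literal over atoms `A`: a polarity and an atom. -/
abbrev GrLit (A : Type*) : Type _ := Bool × A

/-- Dual ground literals: same atom, opposite polarity. -/
def GrDual {A : Type*} (l k : GrLit A) : Prop := l.1 ≠ k.1 ∧ l.2 = k.2

/-- A valuation satisfies a literal if it makes it true. -/
def SatLit {A : Type*} (v : A → Prop) (l : GrLit A) : Prop :=
  if l.1 then v l.2 else ¬ v l.2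

/-- A valuation satisfies a clause set if in each clause some literal is true. -/
def SatMatrix {A : Type*} (v : A → Prop) (M : Finset (Finset (GrLit A))) : Prop :=
  ∀ C ∈ M, ∃ l ∈ C, SatLit v l

/-- A finite nonempty set of nonempty ground clauses is propositionally
unsatisfiable iff every path through it contains a complementary pair. -/
theorem unsat_iff_spanning {A : Type*}
    (M : Finset (Finset (GrLit A)))
    (hM : M.Nonempty) (hne : ∀ C ∈ M, C.Nonempty) :
    (¬ ∃ v : A → Prop, SatMatrix v M) ↔ Spanning GrDual M := by
  constructor
  · intro hunsat p hp
    by_contra hcl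
    apply hunsat
    refine ⟨fun a => ∃ C ∈ M, p C = (true, a), ?_⟩
    intro C hC
    refine ⟨p C, hp C hC, ?_⟩
    unfold SatLit
    rcases hb : (p C).1 with _ | _
    · simp only [hb, if_false]
      rintro ⟨D, hD, hpD⟩
      apply hcl
      refine ⟨C, hC, D, hD, ?_, ?_⟩
      · rintro rfl
        rw [hpD] at hb; simp at hb
      · constructor
        · rw [hb, hpD]; simp
        · rw [hpD]
    · simp only [hb, if_true]
      exact ⟨C, hC, Prod.ext hb rfl⟩
  · rintro hsp ⟨v, hv⟩
    have hL : Nonempty (GrLit A) := by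
      obtain ⟨C, hC⟩ := hM
      obtain ⟨l, hl⟩ := hne C hC
      exact ⟨l⟩
    classical
    set p : Finset (GrLit A) → GrLit A := fun C =>
      if h : ∃ l ∈ C, SatLit v l then h.choose else Classical.arbitrary _ with hpdef
    have hpath : IsPath M p := by
      intro C hC
      have h : ∃ l ∈ C, SatLit v l := hv C hC
      simp only [hpdef, dif_pos h]
      exact h.choose_spec.1
    have hsat : ∀ C ∈ M, SatLit v (p C) := by
      intro C hC
      have h : ∃ l ∈ C, SatLit v l := hv C hC
      simp only [hpdef, dif_pos h]
      exact h.choose_spec.2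
    obtain ⟨C, hC, D, hD, _, hdual⟩ := hsp p hpath
    have h1 := hsat C hC
    have h2 := hsat D hD
    obtain ⟨hb, ha⟩ := hdual
    unfold SatLit at h1 h2
    rcases h : (p C).1 with _ | _ <;> rcases h' : (p D).1 with _ | _ <;>
      simp_all
end
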